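/- Mean-square growth bound: Let T > 0, let A, B_1, …, B_J : [0,T] → ℂ^{N×N} be continuous, let Σ : [0,T] → ℂ^{N×N} be differentiable, Hermitian and positive semidefinite for every t, and satisfy Σ'(t) = A(t) Σ(t) + Σ(t) A(t)† + Σ_{j=1}^{J} B_j(t) Σ(t) B_j(t)†. Let K(t) := (1/2)( A(t) + A(t)† + Σ_{j=1}^{J} B_j(t)† B_j(t) ), and suppose γ : [0,T] → ℝ is continuous with γ(t)·I − K(t) positive semidefinite for all t. Then for all t ∈ [0,T]: tr(Σ(t)) ≤ exp( 2 ∫_0^t γ(s) ds ) · tr(Σ(0)). -/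

import Mathlib

open Matrix ComplexOrder

lemma trace_psd_re_nonneg {n : Type*} [Fintype n] [DecidableEq n]
    {M : Matrix n n ℂ} (hM : M.PosSemidef) : 0 ≤ M.trace.re := by
  have h : ∀ i, 0 ≤ (M i i).re := by
    intro i
    have := hM.dotProduct_mulVec_nonneg (Pi.single i 1)
    simp [dotProduct, mulVec, Pi.single_apply, Complex.le_def] at this
    simpa using this.1
  simpa [Matrix.trace, Matrix.diag] using Finset.sum_nonneg fun i _ => h i

lemma trace_mul_psd_re_nonneg {n : Type*} [Fintype n] [DecidableEq n]
    {P Q : Matrix n n ℂ} (hP : P.PosSemidef) (hQ : Q.PosSemidef) :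
    0 ≤ ((P * Q).trace).re := by
  obtain ⟨S, hS1, hS2⟩ : ∃ S : Matrix n n ℂ, S.PosSemidef ∧ S * S = P :=
    open scoped MatrixOrder in
    ⟨CFC.sqrt P, (CFC.sqrt_nonneg P).posSemidef, CFC.sqrt_mul_sqrt_self P hP.nonneg⟩
  have h1 : (P * Q).trace = (S * Q * Sᴴ).trace := by
    rw [hS1.1.eq, ← hS2, mul_assoc, Matrix.trace_mul_comm, mul_assoc]
  rw [h1]
  exact trace_psd_re_nonneg (hQ.mul_mul_conjTranspose_same S)

/-- The Lyapunov matrix `K(t) := (1/2)(A(t) + A(t)† + Σ_j B_j(t)† B_j(t))`. -/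
noncomputable def lyapK {N J : ℕ} (A : ℝ → Matrix (Fin N) (Fin N) ℂ)
    (B : Fin J → ℝ → Matrix (Fin N) (Fin N) ℂ) (t : ℝ) : Matrix (Fin N) (Fin N) ℂ :=
  (1 / 2 : ℂ) • (A t + (A t)ᴴ + ∑ j : Fin J, (B j t)ᴴ * B j t)

/-- **Mean-square growth bound.** If the Hermitian positive semidefinite
solution `Σ` of the second-moment ODE satisfies `K(t) ⪯ γ(t) I`, then
`tr(Σ(t)) ≤ exp(2∫_0^t γ) tr(Σ(0))`. -/
theorem mean_square_growth_bound (N J : ℕ) (T : ℝ) (hT : 0 < T)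
    (A : ℝ → Matrix (Fin N) (Fin N) ℂ) (B : Fin J → ℝ → Matrix (Fin N) (Fin N) ℂ)
    (Sg : ℝ → Matrix (Fin N) (Fin N) ℂ)
    (hA : ContinuousOn A (Set.Icc 0 T))
    (hB : ∀ j, ContinuousOn (B j) (Set.Icc 0 T))
    (hpos : ∀ t ∈ Set.Icc (0 : ℝ) T, (Sg t).PosSemidef)
    (hODE : ∀ t ∈ Set.Icc (0 : ℝ) T, ∀ a b : Fin N,
      HasDerivWithinAt (fun s => Sg s a b)
        ((A t * Sg t + Sg t * (A t)ᴴ + ∑ j : Fin J, B j t * Sg t * (B j t)ᴴ) a b)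
        (Set.Icc 0 T) t)
    (γ : ℝ → ℝ) (hγ : ContinuousOn γ (Set.Icc 0 T))
    (hbound : ∀ t ∈ Set.Icc (0 : ℝ) T,
      (((γ t : ℂ) • (1 : Matrix (Fin N) (Fin N) ℂ)) - lyapK A B t).PosSemidef) :
    ∀ t ∈ Set.Icc (0 : ℝ) T,
      ((Sg t).trace).re ≤ Real.exp (2 * ∫ s in (0 : ℝ)..t, γ s) * ((Sg 0).trace).re := by
  -- notation
  set f : ℝ → ℝ := fun s => ((Sg s).trace).re with hf_def
  set D : ℝ → ℝ := fun s =>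
    ((A s * Sg s + Sg s * (A s)ᴴ + ∑ j : Fin J, B j s * Sg s * (B j s)ᴴ).trace).re with hD_def
  -- derivative of f
  have hf : ∀ s ∈ Set.Icc (0:ℝ) T, HasDerivWithinAt f (D s) (Set.Icc 0 T) s := by
    intro s hs
    have htr : HasDerivWithinAt (fun u => (Sg u).trace)
        ((A s * Sg s + Sg s * (A s)ᴴ + ∑ j : Fin J, B j s * Sg s * (B j s)ᴴ).trace)
        (Set.Icc 0 T) s := by
      simpa [Matrix.trace, Matrix.diag] using
        HasDerivWithinAt.fun_sum (fun a (_ : a ∈ Finset.univ) => hODE s hs a a)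
    exact (Complex.reCLM.hasFDerivAt).comp_hasDerivWithinAt s htr
  -- key trace identity
  have hKtr : ∀ s : ℝ, (A s * Sg s + Sg s * (A s)ᴴ + ∑ j : Fin J, B j s * Sg s * (B j s)ᴴ).trace
      = 2 * ((lyapK A B s) * (Sg s)).trace := by
    intro s
    have h1 : ((A s)ᴴ * Sg s).trace = (Sg s * (A s)ᴴ).trace := Matrix.trace_mul_comm _ _
    have h2 : ∀ j : Fin J, ((B j s)ᴴ * B j s * Sg s).trace
        = (B j s * Sg s * (B j s)ᴴ).trace := by
      intro j
      rw [mul_assoc]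
      exact Matrix.trace_mul_comm _ _
    simp only [lyapK, Matrix.smul_mul, Matrix.trace_smul, Matrix.add_mul, Matrix.sum_mul,
      Matrix.trace_add, Matrix.trace_sum, h1, smul_eq_mul]
    rw [Finset.sum_congr rfl fun j _ => h2 j]
    ring
  -- bound on D
  have hDb : ∀ s ∈ Set.Icc (0:ℝ) T, D s ≤ 2 * γ s * f s := by
    intro s hs
    have hnn := trace_mul_psd_re_nonneg (hbound s hs) (hpos s hs)
    have hexp : ((((γ s : ℂ) • (1 : Matrix (Fin N) (Fin N) ℂ)) - lyapK A B s) * Sg s).trace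
        = (γ s : ℂ) * (Sg s).trace - ((lyapK A B s) * Sg s).trace := by
      simp [Matrix.sub_mul, Matrix.smul_mul, Matrix.trace_sub, Matrix.trace_smul, smul_eq_mul]
    rw [hexp] at hnn
    have h3 : ((lyapK A B s * Sg s).trace).re ≤ γ s * f s := by
      rw [Complex.sub_re, Complex.mul_re] at hnn
      simp only [Complex.ofReal_re, Complex.ofReal_im, zero_mul, sub_zero] at hnn
      simp only [hf_def]
      linarith
    have h4 : D s = 2 * ((lyapK A B s * Sg s).trace).re := by
      simp only [hD_def, hKtr s, Complex.mul_re, Complex.re_ofNat, Complex.im_ofNat,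
        zero_mul, sub_zero]
    rw [h4]
    linarith
  -- continuous extension of γ and antiderivative
  set γ' : ℝ → ℝ := Set.IccExtend hT.le ((Set.Icc (0:ℝ) T).restrict γ) with hγ'def
  have hγ'c : Continuous γ' :=
    Continuous.Icc_extend' (continuousOn_iff_continuous_restrict.mp hγ)
  have hγ'eq : ∀ s ∈ Set.Icc (0:ℝ) T, γ' s = γ s := by
    intro s hs
    rw [hγ'def, Set.IccExtend_of_mem _ _ hs]
    rfl
  set G : ℝ → ℝ := fun t => ∫ s in (0:ℝ)..t, γ' s with hGdef
  have hGd : ∀ s : ℝ, HasDerivAt G (γ' s) s := fun s =>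
    (hγ'c.integral_hasStrictDerivAt 0 s).hasDerivAt
  have hGc : Continuous G := by
    apply continuous_iff_continuousAt.mpr
    exact fun s => (hGd s).continuousAt
  -- the auxiliary function g
  set g : ℝ → ℝ := fun s => Real.exp (-(2 * G s)) * f s with hgdef
  have hg' : ∀ s ∈ Set.Ioo (0:ℝ) T,
      HasDerivAt g (Real.exp (-(2 * G s)) * (D s - 2 * γ s * f s)) s := by
    intro s hs
    have hsI : s ∈ Set.Icc (0:ℝ) T := Set.mem_Icc_of_Ioo hs
    have hfd : HasDerivAt f (D s) s :=
      (hf s hsI).hasDerivAt (Icc_mem_nhds hs.1 hs.2)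
    have h1 : HasDerivAt (fun u => -(2 * G u)) (-(2 * γ' s)) s :=
      ((hGd s).const_mul 2).neg
    have hed : HasDerivAt (fun u => Real.exp (-(2 * G u)))
        (Real.exp (-(2 * G s)) * (-(2 * γ' s))) s := h1.exp
    have := hed.fun_mul hfd
    rw [hγ'eq s hsI] at this
    exact this.congr_deriv (by ring)
  have hganti : AntitoneOn g (Set.Icc (0:ℝ) T) := by
    apply antitoneOn_of_deriv_nonpos (convex_Icc 0 T)
    · apply ContinuousOn.mul
      · exact ((continuous_const.mul hGc).neg.rexp).continuousOn
      · exact fun s hs => (hf s hs).continuousWithinAt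
    · intro s hs
      rw [interior_Icc] at hs
      exact (hg' s hs).differentiableAt.differentiableWithinAt
    · intro s hs
      rw [interior_Icc] at hs
      rw [(hg' s hs).deriv]
      have hsI : s ∈ Set.Icc (0:ℝ) T := Set.mem_Icc_of_Ioo hs
      have := hDb s hsI
      have hexp0 : (0:ℝ) ≤ Real.exp (-(2 * G s)) := (Real.exp_pos _).le
      nlinarith [Real.exp_pos (-(2 * G s))]
  -- conclude
  intro t ht
  have h1 : g t ≤ g 0 := hganti (Set.left_mem_Icc.mpr hT.le) ht ht.1
  have hG0 : G 0 = 0 := intervalIntegral.integral_same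
  have hGt : G t = ∫ s in (0:ℝ)..t, γ s := by
    apply intervalIntegral.integral_congr
    intro x hx
    rw [Set.uIcc_of_le ht.1] at hx
    exact hγ'eq x ⟨hx.1, hx.2.trans ht.2⟩
  have h2 : Real.exp (-(2 * G t)) * f t ≤ f 0 := by
    simpa [hgdef, hG0] using h1
  have h3 : f t ≤ Real.exp (2 * G t) * f 0 := by
    have := mul_le_mul_of_nonneg_left h2 (Real.exp_pos (2 * G t)).le
    calc f t = Real.exp (2 * G t) * (Real.exp (-(2 * G t)) * f t) := by
          rw [← mul_assoc, ← Real.exp_add]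
          simp
      _ ≤ Real.exp (2 * G t) * f 0 := this
  rw [← hGt]
  exact h3
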